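/- Every finite binary matroid of rank at most 2 is regular; that is, if a finite matroid of rank ≤ 2 admits a representation over F₂, then it admits a representation over every field. -/

import Mathlib

open Set Submodule Module

variable {K : Type} [Field K]

/-- The obvious map from `F₂` into any field. -/
def myg (K : Type) [Field K] : ZMod 2 → K := fun x => if x = 0 then 0 else 1

/-- Coordinatewise version. -/
def myG (K : Type) [Field K] : (Fin 2 → ZMod 2) → (Fin 2 → K) :=
  fun w i => myg K (w i)

lemma myg_injective : Function.Injective (myg K) := by
  intro x y h
  have h2 : ∀ z : ZMod 2, z ≠ 0 → z = 1 := by decide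
  by_cases hx : x = 0 <;> by_cases hy : y = 0
  · rw [hx, hy]
  · simp [myg, hx, hy] at h
  · simp [myg, hx, hy] at h
  · rw [h2 x hx, h2 y hy]

lemma myG_injective : Function.Injective (myG K) := by
  intro x y h
  funext i
  exact myg_injective (congrFun h i)

lemma myG_zero : myG K 0 = 0 := by
  funext i; simp [myG, myg]


lemma nonzero_f2 (u : Fin 2 → ZMod 2) (hu : u ≠ 0) :
    u = ![1, 0] ∨ u = ![0, 1] ∨ u = ![1, 1] := by
  revert hu; revert u; decide

lemma myG_pair_smul (u v : Fin 2 → ZMod 2) (hu : u ≠ 0) (hv : v ≠ 0) (huv : u ≠ v)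
    (c : K) : c • myG K u ≠ myG K v := by
  intro hc
  have h0 := congrFun hc 0
  have h1 := congrFun hc 1
  rcases nonzero_f2 u hu with rfl | rfl | rfl <;>
    rcases nonzero_f2 v hv with rfl | rfl | rfl <;>
    simp [myG, myg] at h0 h1 huv <;> simp_all

/-- A linearly independent subset of a module of finrank ≤ 2 has at most 2 elements. -/
lemma ncard_le_of_linIndep {F V : Type*} [Field F] [AddCommGroup V] [Module F V]
    [Module.Finite F V] (hdim : finrank F V ≤ 2) {T : Set V} (hT : T.Finite)
    (h : LinearIndependent F ((↑) : T → V)) : T.ncard ≤ 2 := by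
  haveI := hT.fintype
  have := LinearIndependent.fintype_card_le_finrank (R := F) (M := V) h
  rw [Set.ncard_eq_toFinset_card' T]
  simpa [Set.toFinset_card] using le_trans this hdim

lemma char_F2 {V : Type*} [AddCommGroup V] [Module (ZMod 2) V]
    [Module.Finite (ZMod 2) V] (hdim : finrank (ZMod 2) V ≤ 2)
    (hfin : ∀ T : Set V, T.Finite) (T : Set V) :
    LinearIndependent (ZMod 2) ((↑) : T → V) ↔ 0 ∉ T ∧ T.ncard ≤ 2 := by
  constructor
  · intro h
    refine ⟨fun h0 => ?_, ncard_le_of_linIndep hdim (hfin T) h⟩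
    · exact (h.ne_zero ⟨0, h0⟩) rfl
  · rintro ⟨h0, hcard⟩
    have hTfin : T.Finite := hfin T
    interval_cases hc : T.ncard
    · rw [(Set.ncard_eq_zero hTfin).mp hc]
      exact linearIndependent_empty _ _
    · obtain ⟨a, rfl⟩ := Set.ncard_eq_one.mp hc
      exact LinearIndepOn.singleton (v := id) (by rintro rfl; exact h0 rfl)
    · obtain ⟨a, b, hab, rfl⟩ := Set.ncard_eq_two.mp hc
      have ha : a ≠ 0 := by rintro rfl; exact h0 (by simp)
      refine linearIndepOn_id_pair ha (fun c => ?_)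
      have hc2 : c = 0 ∨ c = 1 := by revert c; decide
      have hb : b ≠ 0 := by rintro rfl; exact h0 (by simp)
      rcases hc2 with rfl | rfl
      · simpa using hb.symm
      · simpa using hab

lemma char_K (T : Set (Fin 2 → K)) (hT : T ⊆ Set.range (myG K)) :
    LinearIndependent K ((↑) : T → (Fin 2 → K)) ↔ 0 ∉ T ∧ T.ncard ≤ 2 := by
  have hTfin : T.Finite := ((Set.finite_range (myG K)).subset hT)
  have hdim : finrank K (Fin 2 → K) ≤ 2 := by simp
  constructor
  · intro h
    refine ⟨fun h0 => (h.ne_zero ⟨0, h0⟩) rfl, ncard_le_of_linIndep hdim hTfin h⟩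
  · rintro ⟨h0, hcard⟩
    interval_cases hc : T.ncard
    · rw [(Set.ncard_eq_zero hTfin).mp hc]
      exact linearIndependent_empty _ _
    · obtain ⟨a, rfl⟩ := Set.ncard_eq_one.mp hc
      exact LinearIndepOn.singleton (v := id) (by rintro rfl; exact h0 rfl)
    · obtain ⟨a, b, hab, rfl⟩ := Set.ncard_eq_two.mp hc
      have ha : a ≠ 0 := by rintro rfl; exact h0 (by simp)
      have hb : b ≠ 0 := by rintro rfl; exact h0 (by simp)
      obtain ⟨u, rfl⟩ := hT (show a ∈ _ by simp)
      obtain ⟨v, rfl⟩ := hT (show b ∈ _ by simp)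
      have hu : u ≠ 0 := by rintro rfl; exact ha (myG_zero)
      have hv : v ≠ 0 := by rintro rfl; exact hb (myG_zero)
      have huv : u ≠ v := by rintro rfl; exact hab rfl
      exact linearIndepOn_id_pair ha (fun c => myG_pair_smul u v hu hv huv c)

/-- `ρ` is a representation of the matroid `M` over the field `K`. -/
def Matroid.IsRep {α : Type*} (M : Matroid α) (K : Type*) [Field K] {V : Type*}
    [AddCommGroup V] [Module K V] (ρ : α → V) : Prop :=
  (∀ S ⊆ M.E, (M.Indep S ↔ Set.InjOn ρ S ∧ LinearIndependent K ((↑) : (ρ '' S) → V))) ∧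
    Submodule.span K (ρ '' M.E) = ⊤

/-- `M` is representable over the field `K`. -/
def Matroid.RepresentableOver {α : Type*} (M : Matroid α) (K : Type) [Field K] : Prop :=
  ∃ (V : Type) (_ : AddCommGroup V) (_ : Module K V) (ρ : α → V), M.IsRep K ρ

/-- A matroid is binary if it admits a representation over `𝔽₂ = ZMod 2`. -/
def Matroid.IsBinary {α : Type*} (M : Matroid α) : Prop :=
  M.RepresentableOver (ZMod 2)

/-- A matroid is regular if it admits a representation over every field. -/
def Matroid.IsRegular {α : Type*} (M : Matroid α) : Prop :=
  ∀ (K : Type) [Field K], M.RepresentableOver K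

/-- Every finite binary matroid of rank at most 2 is regular. -/
theorem binary_rank_le_two_regular {α : Type*} (M : Matroid α) [M.Finite]
    (hrank : ∃ B, M.IsBase B ∧ B.ncard ≤ 2) (hbin : M.IsBinary) :
    M.IsRegular := by
  classical
  obtain ⟨B, hB, hBcard⟩ := hrank
  obtain ⟨V, _, _, ρ₂, hiff, hspan⟩ := hbin
  intro K _
  have hBE : B ⊆ M.E := hB.subset_ground
  have hBfin : B.Finite := M.ground_finite.subset hBE
  have hBindep := (hiff B hBE).mp hB.indep
  -- the image of the ground set lies in the span of the image of the base
  have hsub : ρ₂ '' M.E ⊆ Submodule.span (ZMod 2) (ρ₂ '' B) := by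
    rintro _ ⟨e, he, rfl⟩
    by_contra hns
    have heB : e ∉ B := fun h => hns (Submodule.subset_span (mem_image_of_mem _ h))
    have hIm : ρ₂ e ∉ ρ₂ '' B := fun h => hns (Submodule.subset_span h)
    have hins : M.Indep (insert e B) := by
      rw [hiff _ (insert_subset he hBE)]
      constructor
      · rw [Set.injOn_insert heB]
        exact ⟨hBindep.1, hIm⟩
      · rw [image_insert_eq]
        refine (linearIndepOn_id_insert hIm).mpr ?_
        exact ⟨hBindep.2, hns⟩
    exact (hB.insert_dep ⟨he, heB⟩).not_indep hins
  have hspanB : Submodule.span (ZMod 2) (ρ₂ '' B) = ⊤ := by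
    refine le_antisymm le_top ?_
    rw [← hspan]
    exact Submodule.span_le.mpr hsub
  haveI : Module.Finite (ZMod 2) V :=
    ⟨Submodule.fg_def.mpr ⟨ρ₂ '' B, hBfin.image _, hspanB⟩⟩
  have hdim : finrank (ZMod 2) V ≤ 2 := by
    haveI : Fintype (ρ₂ '' B) := (hBfin.image ρ₂).fintype
    have h1 := finrank_span_le_card (R := ZMod 2) (ρ₂ '' B)
    rw [hspanB] at h1
    have h2 : (ρ₂ '' B).toFinset.card = (ρ₂ '' B).ncard := (Set.ncard_eq_toFinset_card' _).symm
    rw [finrank_top, h2] at h1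
    exact h1.trans ((Set.ncard_image_le hBfin).trans hBcard)
  -- an injective linear embedding of `V` into `F₂²`
  set n := finrank (ZMod 2) V with hn
  let b : Basis (Fin n) (ZMod 2) V := Module.finBasis (ZMod 2) V
  let j : V →ₗ[ZMod 2] (Fin 2 → ZMod 2) :=
    (Function.ExtendByZero.linearMap (ZMod 2) (Fin.castLE hdim)).comp b.equivFun.toLinearMap
  have hj : Function.Injective j := by
    intro x y hxy
    apply b.equivFun.injective
    funext i
    have := congrFun hxy (Fin.castLE hdim i)
    change Function.extend (Fin.castLE hdim) (b.equivFun x) 0 (Fin.castLE hdim i) =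
      Function.extend (Fin.castLE hdim) (b.equivFun y) 0 (Fin.castLE hdim i) at this
    simpa [j, Function.ExtendByZero.linearMap,
      (Fin.castLE_injective hdim).extend_apply, LinearMap.coe_mk, AddHom.coe_mk] using this
  -- the composite map into `K²`
  set f : V → (Fin 2 → K) := fun v => myG K (j v) with hf
  have hfinj : Function.Injective f := myG_injective.comp hj
  have hf0 : f 0 = 0 := by rw [hf]; simp [myG_zero]
  -- total representing map
  set ρtot : α → (Fin 2 → K) := fun x => if x ∈ M.E then f (ρ₂ x) else 0 with hρtot
  set V' : Submodule K (Fin 2 → K) := Submodule.span K (ρtot '' M.E) with hV'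
  have hmem : ∀ x, ρtot x ∈ V' := by
    intro x
    by_cases hx : x ∈ M.E
    · exact Submodule.subset_span (mem_image_of_mem _ hx)
    · simp [hρtot, if_neg hx]
  set ρ : α → ↥V' := fun x => ⟨ρtot x, hmem x⟩ with hρ
  refine ⟨↥V', inferInstance, inferInstance, ρ, ?_, ?_⟩
  · -- independence characterization
    intro S hSE
    rw [hiff S hSE]
    have hagree : ∀ x ∈ S, ρtot x = f (ρ₂ x) := fun x hx => if_pos (hSE hx)
    have hVfin : ∀ T : Set V, T.Finite := by
      haveI : Finite V := Finite.of_injective _ hj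
      exact fun T => T.toFinite
    have hchar2 := char_F2 (V := V) hdim hVfin (ρ₂ '' S)
    have himg : (Subtype.val : V' → (Fin 2 → K)) '' (ρ '' S) = f '' (ρ₂ '' S) := by
      rw [Set.image_image, Set.image_image]
      exact Set.image_congr hagree
    have hsubrange : f '' (ρ₂ '' S) ⊆ Set.range (myG K) := by
      rintro _ ⟨v, -, rfl⟩; exact ⟨j v, rfl⟩
    have hcharK := char_K (K := K) (f '' (ρ₂ '' S)) hsubrange
    have h0iff : (0 : Fin 2 → K) ∈ f '' (ρ₂ '' S) ↔ (0 : V) ∈ ρ₂ '' S := by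
      constructor
      · rintro ⟨v, hv, hv0⟩
        rwa [show v = 0 from hfinj (hv0.trans hf0.symm)] at hv
      · exact fun h => ⟨0, h, hf0⟩
    have hcardeq : (f '' (ρ₂ '' S)).ncard = (ρ₂ '' S).ncard :=
      Set.ncard_image_of_injective _ hfinj
    have hstep : LinearIndependent K ((↑) : (ρ '' S) → ↥V') ↔
        LinearIndependent K ((↑) : (f '' (ρ₂ '' S)) → (Fin 2 → K)) := by
      rw [← himg]
      refine Iff.trans ?_ (linearIndepOn_iff_image (Subtype.val_injective.injOn))
      exact (V'.subtype.linearIndependent_iff (Submodule.ker_subtype V')).symm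
    have hlke : LinearIndependent K ((↑) : (ρ '' S) → ↥V') ↔
        LinearIndependent (ZMod 2) ((↑) : (ρ₂ '' S) → V) := by
      rw [hstep, hcharK, hchar2, h0iff, hcardeq]
    constructor
    · rintro ⟨hinj, hli⟩
      constructor
      · -- injectivity
        intro x hx y hy hxy
        apply hinj hx hy
        apply hfinj
        rw [← hagree x hx, ← hagree y hy]
        exact Subtype.ext_iff.mp hxy
      · exact hlke.mpr hli
    · rintro ⟨hinj, hli⟩
      constructor
      · intro x hx y hy hxy
        apply hinj hx hy
        apply Subtype.ext
        show ρtot x = ρtot y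
        rw [hagree x hx, hagree y hy, hxy]
      · exact hlke.mp hli
  · -- the span condition
    apply Submodule.map_injective_of_injective V'.injective_subtype
    rw [Submodule.map_span, Submodule.map_top, Submodule.range_subtype]
    have : V'.subtype '' (ρ '' M.E) = ρtot '' M.E := by
      rw [Set.image_image]
      rfl
    rw [this, hV']
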